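/- arXiv:2205.10310 — 2 statements merged into one kernel-verified Lean document; each statement's English description precedes it below -/
import Mathlib

section
/- Let U be uniformly distributed on (0,1), let F0 and F1 be cumulative distribution functions with quantile functions Q0 and Q1 satisfying Q1(u) ≤ Q0(u) for all u ∈ (0,1), and set h0 := Q0(U), h1 := Q1(U). Fix k ∈ ℝ and suppose: F0 is differentiable at k with F0(k) ∈ (0,1) and f0(k) := F0'(k) > 0 and ln F0 is concave on {F0 > 0}; F1 is differentiable at k with F1(k) ∈ (0,1) and f1(k) := F1'(k) > 0 and ln(1 − F1) is concave on {F1 < 1}; and B := F1(k) − F0(k) > 0. Then E[h0 − h1 | h1 ≤ k ≤ h0] ≥ g(F0(k), f0(k), B) + g(1 − F1(k), f1(k), B). -/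
open MeasureTheory

/-- A cumulative distribution function: monotone, right-continuous, with limits
0 at `-∞` and 1 at `+∞`. -/
def IsCDF (F : ℝ → ℝ) : Prop :=
  Monotone F ∧ (∀ x, ContinuousWithinAt F (Set.Ici x) x) ∧
    Filter.Tendsto F Filter.atBot (nhds 0) ∧ Filter.Tendsto F Filter.atTop (nhds 1)

/-- The quantile function of a CDF: `Q(u) = inf {x | F x ≥ u}`. -/
noncomputable def quantile (F : ℝ → ℝ) (u : ℝ) : ℝ := sInf {x | u ≤ F x}

/-- The function `g(a,b,x) = (a/(b·x))·(a+x)·ln(1 + x/a) - a/b` from the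
paper's Theorem 1. -/
noncomputable def g (a b x : ℝ) : ℝ :=
  a / (b * x) * (a + x) * Real.log (1 + x / a) - a / b

/- ### Auxiliary lemmas -/

lemma IsCDF.nonempty_setOf {F : ℝ → ℝ} (hF : IsCDF F) {u : ℝ} (hu : u < 1) :
    {x | u ≤ F x}.Nonempty := by
  obtain ⟨x, hx⟩ := (hF.2.2.2.eventually (eventually_gt_nhds hu)).exists
  exact ⟨x, hx.le⟩

lemma IsCDF.bddBelow_setOf {F : ℝ → ℝ} (hF : IsCDF F) {u : ℝ} (hu : 0 < u) :
    BddBelow {x | u ≤ F x} := by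
  obtain ⟨x₀, hx₀⟩ := (Filter.eventually_atBot).1 (hF.2.2.1.eventually (eventually_lt_nhds hu))
  refine ⟨x₀, fun z hz => ?_⟩
  by_contra h
  exact absurd hz (not_le.2 (hx₀ z (le_of_not_ge h)))

lemma IsCDF.quantile_le {F : ℝ → ℝ} (hF : IsCDF F) {u x : ℝ} (hu : 0 < u) (h : u ≤ F x) :
    quantile F u ≤ x :=
  csInf_le (hF.bddBelow_setOf hu) h

lemma IsCDF.le_F_quantile {F : ℝ → ℝ} (hF : IsCDF F) {u : ℝ} (h0 : 0 < u) (h1 : u < 1) :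
    u ≤ F (quantile F u) := by
  set q := quantile F u with hq
  by_contra hlt
  push_neg at hlt
  -- `q` is in the closure of the set `{x | u ≤ F x}`
  have hne := hF.nonempty_setOf h1
  have hbdd := hF.bddBelow_setOf h0
  have hcl : q ∈ closure {x | u ≤ F x} := csInf_mem_closure hne hbdd
  have hsub : {x | u ≤ F x} ⊆ Set.Ici q := fun z hz => csInf_le hbdd hz
  have hnb : (nhdsWithin q {x | u ≤ F x}).NeBot := mem_closure_iff_nhdsWithin_neBot.1 hcl
  have hev : ∀ᶠ y in nhdsWithin q {x | u ≤ F x}, F y < u := by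
    have h1' : Filter.Tendsto F (nhdsWithin q (Set.Ici q)) (nhds (F q)) := hF.2.1 q
    have h2' : ∀ᶠ y in nhdsWithin q (Set.Ici q), F y < u := h1' (Iio_mem_nhds hlt)
    exact Filter.Eventually.filter_mono (nhdsWithin_mono q hsub) h2'
  obtain ⟨y, hy1, hy2⟩ := (hev.and (eventually_mem_nhdsWithin)).exists
  exact absurd hy2 (not_le.2 hy1)

lemma IsCDF.monotoneOn_quantile {F : ℝ → ℝ} (hF : IsCDF F) :
    MonotoneOn (quantile F) (Set.Ioo (0 : ℝ) 1) := by
  intro u hu v hv huv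
  exact csInf_le_csInf (hF.bddBelow_setOf hu.1) (hF.nonempty_setOf hv.2)
    (fun x hx => le_trans huv hx)

/-- Tangent-line bound for a concave function with a derivative at a point. -/
lemma ConcaveOn.le_tangent {s : Set ℝ} {f : ℝ → ℝ} (hf : ConcaveOn ℝ s f)
    {k d : ℝ} (hk : k ∈ s) (hd : HasDerivAt f d k) :
    ∀ x ∈ s, f x ≤ f k + d * (x - k) := by
  intro x hx
  rcases lt_trichotomy x k with hxk | rfl | hxk
  · -- x < k : d ≤ slope f k x
    have hslope : Filter.Tendsto (fun y => (f y - f k) / (y - k)) (nhdsWithin k (Set.Iio k))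
        (nhds d) := by
      have := hasDerivAt_iff_tendsto_slope.1 hd
      have hle : nhdsWithin k (Set.Iio k) ≤ nhdsWithin k {k}ᶜ :=
        nhdsWithin_mono _ (fun y hy => ne_of_lt hy)
      have := this.mono_left hle
      refine this.congr' ?_
      filter_upwards [self_mem_nhdsWithin] with y hy
      rw [slope_def_field]
    have hev : ∀ᶠ y in nhdsWithin k (Set.Iio k),
        (f y - f k) / (y - k) ≤ (f x - f k) / (x - k) := by
      filter_upwards [Ioo_mem_nhdsLT_of_mem (Set.mem_Ioc.2 ⟨hxk, le_refl k⟩),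
        self_mem_nhdsWithin] with y hy hy'
      have hys : y ∈ s := hf.1.ordConnected.out hx hk ⟨hy.1.le, hy.2.le⟩
      have := hf.neg.secant_mono hk hx hys (ne_of_lt hxk) (ne_of_lt hy.2) hy.1.le
      simp only [Pi.neg_apply] at this
      have e1 : (-f x - -f k) / (x - k) = -((f x - f k) / (x - k)) := by ring
      have e2 : (-f y - -f k) / (y - k) = -((f y - f k) / (y - k)) := by ring
      rw [e1, e2] at this
      linarith
    have hd_le : d ≤ (f x - f k) / (x - k) := le_of_tendsto hslope hev
    have hxk' : x - k < 0 := by linarith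
    rw [le_div_iff_of_neg hxk'] at hd_le
    linarith
  · simp
  · -- k < x : slope f k x ≤ d
    have hslope : Filter.Tendsto (fun y => (f y - f k) / (y - k)) (nhdsWithin k (Set.Ioi k))
        (nhds d) := by
      have := hasDerivAt_iff_tendsto_slope.1 hd
      have hle : nhdsWithin k (Set.Ioi k) ≤ nhdsWithin k {k}ᶜ :=
        nhdsWithin_mono _ (fun y hy => ne_of_gt hy)
      have := this.mono_left hle
      refine this.congr' ?_
      filter_upwards [self_mem_nhdsWithin] with y hy
      rw [slope_def_field]
    have hev : ∀ᶠ y in nhdsWithin k (Set.Ioi k),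
        (f x - f k) / (x - k) ≤ (f y - f k) / (y - k) := by
      filter_upwards [Ioo_mem_nhdsGT_of_mem (Set.mem_Ico.2 ⟨le_refl k, hxk⟩),
        self_mem_nhdsWithin] with y hy hy'
      have hys : y ∈ s := hf.1.ordConnected.out hk hx ⟨hy.1.le, hy.2.le⟩
      have := hf.neg.secant_mono hk hys hx (ne_of_gt hy.1) (ne_of_gt hxk) hy.2.le
      simp only [Pi.neg_apply] at this
      have e1 : (-f x - -f k) / (x - k) = -((f x - f k) / (x - k)) := by ring
      have e2 : (-f y - -f k) / (y - k) = -((f y - f k) / (y - k)) := by ring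
      rw [e1, e2] at this
      linarith
    have hd_le : (f x - f k) / (x - k) ≤ d := ge_of_tendsto hslope hev
    have hxk' : 0 < x - k := by linarith
    rw [div_le_iff₀ hxk'] at hd_le
    linarith

/-- Lower bound `Δ_k^L` of the paper's Theorem 1 (rank-invariant case, no
counterfactual bunchers): under bi-log-concavity conditions (concavity of
`ln F0` and of `ln(1 - F1)`), the buncher ATE `E[h0 - h1 | h1 ≤ k ≤ h0]` is at
least `g(F0(k), f0(k), B) + g(1 - F1(k), f1(k), B)` where `B = F1(k) - F0(k)`. -/
theorem stmt9 {Ω : Type*} [MeasurableSpace Ω] (μ : Measure Ω)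
    [IsProbabilityMeasure μ]
    (U : Ω → ℝ) (hU : Measurable U)
    (hUnif : μ.map U = volume.restrict (Set.Ioo (0 : ℝ) 1))
    (F0 F1 : ℝ → ℝ) (hF0 : IsCDF F0) (hF1 : IsCDF F1)
    (hQle : ∀ u ∈ Set.Ioo (0 : ℝ) 1, quantile F1 u ≤ quantile F0 u)
    (h0 h1 : Ω → ℝ)
    (hh0 : h0 = fun ω => quantile F0 (U ω))
    (hh1 : h1 = fun ω => quantile F1 (U ω))
    (k f0 f1 : ℝ)
    (hF0k : F0 k ∈ Set.Ioo (0 : ℝ) 1) (hf0 : 0 < f0)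
    (hd0 : HasDerivAt F0 f0 k)
    (hlc0 : ConcaveOn ℝ {x | 0 < F0 x} (fun x => Real.log (F0 x)))
    (hF1k : F1 k ∈ Set.Ioo (0 : ℝ) 1) (hf1 : 0 < f1)
    (hd1 : HasDerivAt F1 f1 k)
    (hlc1 : ConcaveOn ℝ {x | F1 x < 1} (fun x => Real.log (1 - F1 x)))
    (hB : 0 < F1 k - F0 k) :
    g (F0 k) f0 (F1 k - F0 k) + g (1 - F1 k) f1 (F1 k - F0 k)
      ≤ (∫ ω in {ω | h1 ω ≤ k ∧ k ≤ h0 ω}, (h0 ω - h1 ω) ∂μ)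
          / (μ {ω | h1 ω ≤ k ∧ k ≤ h0 ω}).toReal := by
  -- notation
  set a := F0 k with ha_def
  set c := F1 k with hc_def
  set c' := 1 - F1 k with hc'_def
  have ha0 : 0 < a := hF0k.1
  have ha1 : a < 1 := hF0k.2
  have hc0 : 0 < c := hF1k.1
  have hc1 : c < 1 := hF1k.2
  have hc'0 : 0 < c' := by simp only [hc'_def]; linarith
  have hac : a < c := by simpa [ha_def, hc_def] using hB
  set B := F1 k - F0 k with hB_def
  have hBac : B = c - a := rfl
  -- the bunching set
  set S : Set Ω := {ω | h1 ω ≤ k ∧ k ≤ h0 ω} with hS_def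
  -- membership facts
  have mem_S_of_Ioc : ∀ u ∈ Set.Ioc a c, quantile F1 u ≤ k ∧ k ≤ quantile F0 u := by
    intro u hu
    have hu0 : 0 < u := lt_trans ha0 hu.1
    have hu1 : u < 1 := lt_of_le_of_lt hu.2 hc1
    constructor
    · exact hF1.quantile_le hu0 hu.2
    · refine le_csInf (hF0.nonempty_setOf hu1) (fun x hx => ?_)
      by_contra h
      push_neg at h
      have : F0 x ≤ a := hF0.1 h.le
      exact absurd hx (not_le.2 (lt_of_le_of_lt this hu.1))
  have mem_Icc_of_S : ∀ u ∈ Set.Ioo (0:ℝ) 1,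
      quantile F1 u ≤ k → k ≤ quantile F0 u → u ∈ Set.Icc a c := by
    intro u hu hq1 hq0
    constructor
    · -- a = F0 k ≤ u, using left-continuity of F0 at k
      have hlt : ∀ x < k, F0 x < u := by
        intro x hx
        by_contra h
        push_neg at h
        have hqx : quantile F0 u ≤ x := hF0.quantile_le hu.1 h
        linarith [le_trans hq0 hqx]
      have hts : Filter.Tendsto F0 (nhdsWithin k (Set.Iio k)) (nhds a) :=
        hd0.continuousAt.tendsto.mono_left nhdsWithin_le_nhds
      exact le_of_tendsto hts (by
        filter_upwards [self_mem_nhdsWithin] with x hx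
        exact (hlt x hx).le)
    · -- u ≤ c = F1 k
      calc u ≤ F1 (quantile F1 u) := hF1.le_F_quantile hu.1 hu.2
        _ ≤ F1 k := hF1.1 hq1
  -- S is a.e. equal to U ⁻¹' (Ioc a c)
  have hnullset : μ (U ⁻¹' ((Set.Ioo (0:ℝ) 1)ᶜ ∪ {a})) = 0 := by
    rw [← Measure.map_apply hU ((measurableSet_Ioo.compl).union (measurableSet_singleton a)),
      hUnif, Measure.restrict_apply ((measurableSet_Ioo.compl).union (measurableSet_singleton a))]
    refine le_antisymm ?_ zero_le
    have hsub : ((Set.Ioo (0:ℝ) 1)ᶜ ∪ {a}) ∩ Set.Ioo 0 1 ⊆ {a} := by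
      intro x hx
      rcases hx.1 with h | h
      · exact absurd hx.2 h
      · exact h
    calc volume (((Set.Ioo (0:ℝ) 1)ᶜ ∪ {a}) ∩ Set.Ioo 0 1) ≤ volume {a} := measure_mono hsub
      _ = 0 := Real.volume_singleton
  have hae : S =ᵐ[μ] U ⁻¹' (Set.Ioc a c) := by
    rw [Filter.eventuallyEq_set]
    have := measure_eq_zero_iff_ae_notMem.1 hnullset
    filter_upwards [this] with ω hω
    simp only [Set.mem_preimage, Set.mem_union, Set.mem_compl_iff, Set.mem_singleton_iff,
      not_or, not_not] at hω
    obtain ⟨hωIoo, hωa⟩ := hω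
    constructor
    · intro hωS
      have hωS' : h1 ω ≤ k ∧ k ≤ h0 ω := hωS
      have h1' : quantile F1 (U ω) ≤ k := by rw [hh1] at hωS'; exact hωS'.1
      have h0' : k ≤ quantile F0 (U ω) := by rw [hh0] at hωS'; exact hωS'.2
      have := mem_Icc_of_S (U ω) hωIoo h1' h0'
      exact ⟨lt_of_le_of_ne this.1 (Ne.symm hωa), this.2⟩
    · intro hωIoc
      have := mem_S_of_Ioc (U ω) hωIoc
      show h1 ω ≤ k ∧ k ≤ h0 ω
      rw [hh0, hh1]
      exact ⟨this.1, this.2⟩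
  -- measure of S
  have hIocIoo : Set.Ioc a c ⊆ Set.Ioo (0:ℝ) 1 := fun u hu =>
    ⟨lt_trans ha0 hu.1, lt_of_le_of_lt hu.2 hc1⟩
  have hμS : μ S = ENNReal.ofReal B := by
    rw [measure_congr hae, ← Measure.map_apply hU measurableSet_Ioc, hUnif,
      Measure.restrict_apply measurableSet_Ioc,
      Set.inter_eq_self_of_subset_left hIocIoo, Real.volume_Ioc]
  have hμS_toReal : (μ S).toReal = B := by
    rw [hμS, ENNReal.toReal_ofReal hB.le]
  -- measurability of the quantile difference
  have haem : AEMeasurable (fun u => quantile F0 u - quantile F1 u)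
      (volume.restrict (Set.Ioo (0:ℝ) 1)) :=
    (aemeasurable_restrict_of_monotoneOn measurableSet_Ioo hF0.monotoneOn_quantile).sub
      (aemeasurable_restrict_of_monotoneOn measurableSet_Ioo hF1.monotoneOn_quantile)
  -- the numerator as an integral over (a, c]
  have hNum : (∫ ω in S, (h0 ω - h1 ω) ∂μ)
      = ∫ u in Set.Ioc a c, (quantile F0 u - quantile F1 u) := by
    rw [setIntegral_congr_set hae, hh0, hh1]
    have hAESM : AEStronglyMeasurable (fun u => quantile F0 u - quantile F1 u)
        (Measure.map U μ) := by
      rw [hUnif]; exact haem.aestronglyMeasurable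
    rw [← setIntegral_map measurableSet_Ioc hAESM hU.aemeasurable, hUnif,
      Measure.restrict_restrict measurableSet_Ioc,
      Set.inter_eq_self_of_subset_left hIocIoo]
  -- pointwise lower bound on (a, c]
  set L : ℝ → ℝ := fun u => a / f0 * (Real.log u - Real.log a)
      + c' / f1 * (Real.log (1 - u) - Real.log c') with hL_def
  have hd0log : HasDerivAt (fun x => Real.log (F0 x)) (f0 / a) k := by
    simpa using hd0.log (ne_of_gt ha0)
  have hd1log : HasDerivAt (fun x => Real.log (1 - F1 x)) (-f1 / c') k := by
    have h1 : HasDerivAt (fun x => 1 - F1 x) (-f1) k := hd1.const_sub 1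
    simpa using h1.log (ne_of_gt hc'0)
  have hk0 : k ∈ {x | 0 < F0 x} := ha0
  have hk1 : k ∈ {x | F1 x < 1} := hc1
  have hlb : ∀ u ∈ Set.Ioc a c, L u ≤ quantile F0 u - quantile F1 u := by
    intro u hu
    have hu0 : 0 < u := lt_trans ha0 hu.1
    have hu1 : u < 1 := lt_of_le_of_lt hu.2 hc1
    -- lower bound for quantile F0 u
    have hq0 : k + a / f0 * (Real.log u - Real.log a) ≤ quantile F0 u := by
      refine le_csInf (hF0.nonempty_setOf hu1) (fun x hx => ?_)
      have hxpos : 0 < F0 x := lt_of_lt_of_le hu0 hx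
      have htan := hlc0.le_tangent hk0 hd0log x hxpos
      have hlogx : Real.log u ≤ Real.log (F0 x) := Real.log_le_log hu0 hx
      have key : Real.log u - Real.log a ≤ f0 / a * (x - k) := by
        linarith
      have h2 : a / f0 * (f0 / a * (x - k)) = x - k := by field_simp
      have := mul_le_mul_of_nonneg_left key (by positivity : (0:ℝ) ≤ a / f0)
      rw [h2] at this
      linarith
    -- upper bound for quantile F1 u
    have hq1 : quantile F1 u ≤ k - c' / f1 * (Real.log (1 - u) - Real.log c') := by
      set x₀ := k - c' / f1 * (Real.log (1 - u) - Real.log c') with hx₀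
      refine hF1.quantile_le hu0 ?_
      rcases lt_or_ge (F1 x₀) 1 with hlt | hge
      · have htan := hlc1.le_tangent hk1 hd1log x₀ hlt
        have h2 : -f1 / c' * (x₀ - k) = Real.log (1 - u) - Real.log c' := by
          rw [hx₀]; field_simp; ring
        simp only [h2] at htan
        have hlog : Real.log (1 - F1 x₀) ≤ Real.log (1 - u) := by linarith
        have h1u : 0 < 1 - u := by linarith
        have h1F : 0 < 1 - F1 x₀ := by linarith
        have := (Real.log_le_log_iff h1F h1u).1 hlog
        linarith
      · linarith
    simp only [hL_def]
    linarith
  -- integrability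
  haveI : IsFiniteMeasure (volume.restrict (Set.Ioc a c)) := by
    constructor
    rw [Measure.restrict_apply_univ, Real.volume_Ioc]
    exact ENNReal.ofReal_lt_top
  have hQint : IntegrableOn (fun u => quantile F0 u - quantile F1 u) (Set.Ioc a c) volume := by
    have haem' : AEStronglyMeasurable (fun u => quantile F0 u - quantile F1 u)
        (volume.restrict (Set.Ioc a c)) :=
      (haem.mono_measure (Measure.restrict_mono hIocIoo le_rfl)).aestronglyMeasurable
    refine ⟨haem', ?_⟩
    apply HasFiniteIntegral.of_bounded (C := quantile F0 c - quantile F1 a)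
    rw [ae_restrict_iff' measurableSet_Ioc]
    refine Filter.Eventually.of_forall (fun u hu => ?_)
    have hu0 : 0 < u := lt_trans ha0 hu.1
    have hu1 : u < 1 := lt_of_le_of_lt hu.2 hc1
    have h1 : quantile F1 a ≤ quantile F1 u :=
      hF1.monotoneOn_quantile ⟨ha0, ha1⟩ ⟨hu0, hu1⟩ hu.1.le
    have h2 : quantile F0 u ≤ quantile F0 c :=
      hF0.monotoneOn_quantile ⟨hu0, hu1⟩ ⟨hc0, hc1⟩ hu.2
    have h3 : quantile F1 u ≤ quantile F0 u := hQle u ⟨hu0, hu1⟩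
    rw [Real.norm_eq_abs, abs_le]
    constructor <;> linarith
  have hLcont : ContinuousOn L (Set.Icc a c) := by
    intro u hu
    have hu0 : (0:ℝ) < u := lt_of_lt_of_le ha0 hu.1
    have h1u : 1 - u ≠ 0 := by
      have : u < 1 := lt_of_le_of_lt hu.2 hc1
      intro h; linarith [(by linarith : (0:ℝ) < 1 - u)]
    have : ContinuousAt L u := by
      apply ContinuousAt.add
      · exact (((Real.continuousAt_log hu0.ne').sub continuousAt_const).const_mul _)
      · exact ((((Real.continuousAt_log h1u).comp
          ((continuous_const.sub continuous_id).continuousAt)).sub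
            continuousAt_const).const_mul _)
    exact this.continuousWithinAt
  have hLint : IntegrableOn L (Set.Ioc a c) volume :=
    (hLcont.integrableOn_Icc).mono_set Set.Ioc_subset_Icc_self
  -- comparison of integrals
  have hmono : (∫ u in Set.Ioc a c, L u) ≤
      ∫ u in Set.Ioc a c, (quantile F0 u - quantile F1 u) :=
    setIntegral_mono_on hLint hQint measurableSet_Ioc hlb
  -- compute the integral of L by FTC
  set H : ℝ → ℝ := fun u => a / f0 * (u * (Real.log u - Real.log a) - u)
      + c' / f1 * (-(1 - u) * (Real.log (1 - u) - Real.log c') - u) with hH_def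
  have hderiv : ∀ u ∈ Set.uIcc a c, HasDerivAt H (L u) u := by
    intro u hu
    rw [Set.uIcc_of_le hac.le] at hu
    have hu0 : (0:ℝ) < u := lt_of_lt_of_le ha0 hu.1
    have hu1 : u < 1 := lt_of_le_of_lt hu.2 hc1
    have h1u : (0:ℝ) < 1 - u := by linarith
    have hA : HasDerivAt (fun v => v * (Real.log v - Real.log a) - v)
        (Real.log u - Real.log a) u := by
      have h1 : HasDerivAt (fun v : ℝ => v * (Real.log v - Real.log a))
          (1 * (Real.log u - Real.log a) + u * u⁻¹) u :=
        (hasDerivAt_id u).mul ((Real.hasDerivAt_log hu0.ne').sub_const (Real.log a))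
      have h2 := h1.sub (hasDerivAt_id u)
      exact h2.congr_deriv (by linear_combination mul_inv_cancel₀ hu0.ne')
    have hB' : HasDerivAt (fun v => -(1 - v) * (Real.log (1 - v) - Real.log c') - v)
        (Real.log (1 - u) - Real.log c') u := by
      have hlin : HasDerivAt (fun v : ℝ => 1 - v) (-1) u := by
        simpa using (hasDerivAt_id u).const_sub 1
      have hlog : HasDerivAt (fun v : ℝ => Real.log (1 - v) - Real.log c')
          (-1 / (1 - u)) u := (hlin.log h1u.ne').sub_const (Real.log c')
      have h1 : HasDerivAt (fun v : ℝ => -(1 - v) * (Real.log (1 - v) - Real.log c'))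
          (-(-1) * (Real.log (1 - u) - Real.log c') + -(1 - u) * (-1 / (1 - u))) u :=
        (hlin.neg).mul hlog
      have h2 := h1.sub (hasDerivAt_id u)
      exact h2.congr_deriv (by linear_combination mul_one_div_cancel h1u.ne')
    have := ((hA.const_mul (a / f0)).add (hB'.const_mul (c' / f1)))
    exact this
  have hLii : IntervalIntegrable L volume a c := by
    apply ContinuousOn.intervalIntegrable
    rwa [Set.uIcc_of_le hac.le]
  have hFTC : (∫ u in Set.Ioc a c, L u) = H c - H a := by
    rw [← intervalIntegral.integral_of_le hac.le]
    exact intervalIntegral.integral_eq_sub_of_hasDerivAt hderiv hLii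
  -- value of H c - H a
  have hgval : B * (g a f0 B + g c' f1 B) = H c - H a := by
    have hcc' : c' = 1 - c := by rw [hc'_def, hc_def]
    have h1c : (0:ℝ) < 1 - c := by linarith
    have h1a : (0:ℝ) < 1 - a := by linarith
    have e1 : Real.log (1 + B / a) = Real.log c - Real.log a := by
      have h : (1 : ℝ) + B / a = c / a := by
        rw [hBac]; field_simp; ring
      rw [h, Real.log_div hc0.ne' ha0.ne']
    have e2 : Real.log (1 + B / c') = Real.log (1 - a) - Real.log c' := by
      have h : (1 : ℝ) + B / c' = (1 - a) / c' := by
        rw [hBac, hcc']; field_simp; ring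
      rw [h, Real.log_div h1a.ne' hc'0.ne']
    rw [g, g, e1, e2]
    simp only [hH_def]
    rw [hBac, hcc']
    have hca : c - a ≠ 0 := (sub_pos.2 hac).ne'
    field_simp
    ring
  -- put everything together
  have hchain : B * (g a f0 B + g c' f1 B) ≤ ∫ ω in S, (h0 ω - h1 ω) ∂μ := by
    rw [hNum, hgval]
    calc H c - H a = ∫ u in Set.Ioc a c, L u := hFTC.symm
      _ ≤ _ := hmono
  rw [hμS_toReal, le_div_iff₀ hB]
  linarith [hchain]
end

section
/- Let U be uniformly distributed on (0,1), let F0 and F1 be cumulative distribution functions with quantile functions Q0 and Q1 satisfying Q1(u) ≤ Q0(u) for all u ∈ (0,1), and set h0 := Q0(U), h1 := Q1(U). Fix k ∈ ℝ and suppose: F0 is differentiable at k with F0(k) ∈ (0,1) and f0(k) := F0'(k) > 0 and ln(1 − F0) is concave on {F0 < 1}; F1 is differentiable at k with F1(k) ∈ (0,1) and f1(k) := F1'(k) > 0 and ln F1 is concave on {F1 > 0}; and B := F1(k) − F0(k) > 0. Then E[h0 − h1 | h1 ≤ k ≤ h0] ≤ −g(1 − F0(k), f0(k), −B) − g(F1(k),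 f1(k), −B). -/
open MeasureTheory

section helpers

variable {F : ℝ → ℝ} {u : ℝ}

lemma qset_nonempty (hF : IsCDF F) (hu1 : u < 1) : {x | u ≤ F x}.Nonempty := by
  obtain ⟨x, hx⟩ := (hF.2.2.2.eventually (Ioi_mem_nhds hu1)).exists
  exact ⟨x, le_of_lt hx⟩

lemma qset_bddBelow (hF : IsCDF F) (hu0 : 0 < u) : BddBelow {x | u ≤ F x} := by
  obtain ⟨z, hz⟩ := Filter.eventually_atBot.mp (hF.2.2.1.eventually (Iio_mem_nhds hu0))
  exact ⟨z, fun x hx => le_of_not_gt fun h' => absurd hx (not_le.2 (hz x h'.le))⟩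

lemma le_cdf_quantile (hF : IsCDF F) (hu0 : 0 < u) (hu1 : u < 1) :
    u ≤ F (quantile F u) := by
  by_contra h
  push_neg at h
  have hE : {x | F x < u} ∈ nhdsWithin (quantile F u) (Set.Ici (quantile F u)) :=
    (hF.2.1 (quantile F u)).preimage_mem_nhdsWithin (Iio_mem_nhds h)
  obtain ⟨b, hb, hIco⟩ := mem_nhdsGE_iff_exists_Ico_subset.mp hE
  obtain ⟨x, hxS, hxb⟩ := (csInf_lt_iff (qset_bddBelow hF hu0) (qset_nonempty hF hu1)).mp hb
  have hFx : F x < u := hIco ⟨csInf_le (qset_bddBelow hF hu0) hxS, hxb⟩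
  exact absurd hxS (not_le.2 hFx)

lemma quantile_le_iff (hF : IsCDF F) (hu0 : 0 < u) (hu1 : u < 1) {y : ℝ} :
    quantile F u ≤ y ↔ u ≤ F y := by
  constructor
  · intro h
    exact (le_cdf_quantile hF hu0 hu1).trans (hF.1 h)
  · intro h
    exact csInf_le (qset_bddBelow hF hu0) h

lemma cdf_lt_of_lt_quantile (hF : IsCDF F) (hu0 : 0 < u) {x : ℝ}
    (h : x < quantile F u) : F x < u := by
  by_contra h'
  exact absurd (csInf_le (qset_bddBelow hF hu0) (not_lt.mp h')) (not_le.2 h)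

lemma quantile_mono (hF : IsCDF F) {u v : ℝ} (hu0 : 0 < u) (huv : u ≤ v) (hv1 : v < 1) :
    quantile F u ≤ quantile F v :=
  csInf_le_csInf (qset_bddBelow hF hu0) (qset_nonempty hF hv1)
    (fun _ hx => le_trans huv hx)

lemma concave_tangent {S : Set ℝ} {L : ℝ → ℝ} {d k x : ℝ} (h : ConcaveOn ℝ S L)
    (hk : k ∈ S) (hd : HasDerivAt L d k) (hx : x ∈ S) :
    L x ≤ L k + d * (x - k) := by
  have hneg : ConvexOn ℝ S (-L) := h.neg
  rcases lt_trichotomy x k with hlt | heq | hgt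
  · have := hneg.slope_le_of_hasDerivAt hx hk hlt hd.neg
    rw [slope_def_field] at this
    simp only [Pi.neg_apply] at this
    have hkx : 0 < k - x := by linarith
    rw [div_le_iff₀ hkx] at this
    nlinarith
  · simp [heq]
  · have := hneg.le_slope_of_hasDerivAt hk hx hgt hd.neg
    rw [slope_def_field] at this
    simp only [Pi.neg_apply] at this
    have hkx : 0 < x - k := by linarith
    rw [le_div_iff₀ hkx] at this
    nlinarith

lemma bound0 {F0 : ℝ → ℝ} {k f0 u : ℝ} (hF0 : IsCDF F0)
    (hk0 : 0 < F0 k) (hk1 : F0 k < 1) (hf0 : 0 < f0) (hd0 : HasDerivAt F0 f0 k)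
    (hlc0 : ConcaveOn ℝ {x | F0 x < 1} (fun x => Real.log (1 - F0 x)))
    (hu0 : F0 k < u) (hu1 : u < 1) :
    quantile F0 u ≤ k + (1 - F0 k) / f0 * (Real.log (1 - F0 k) - Real.log (1 - u)) := by
  have hupos : 0 < u := lt_trans hk0 hu0
  set A := 1 - F0 k with hA
  have hApos : 0 < A := by simp [hA]; linarith
  set c := A / f0 * (Real.log A - Real.log (1 - u)) with hc
  have hlog : Real.log (1 - u) < Real.log A :=
    Real.log_lt_log (by linarith) (by simp only [hA]; linarith)
  have hcpos : 0 < c := mul_pos (div_pos hApos hf0) (by linarith)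
  by_contra hcon
  push_neg at hcon
  have hx : F0 (k + c) < u := cdf_lt_of_lt_quantile hF0 hupos hcon
  have hmem : (k + c) ∈ {x | F0 x < 1} := by
    simp only [Set.mem_setOf_eq]; linarith
  have hkmem : k ∈ {x | F0 x < 1} := hk1
  have hF1sub : HasDerivAt (fun x => 1 - F0 x) (-f0) k := by
    exact hd0.const_sub 1
  have hL : HasDerivAt (fun x => Real.log (1 - F0 x)) (A⁻¹ * (-f0)) k := by
    have := (Real.hasDerivAt_log (ne_of_gt hApos)).comp k hF1sub
    exact this
  have htan := concave_tangent hlc0 hkmem hL hmem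
  have hlog2 : Real.log (1 - u) < Real.log (1 - F0 (k + c)) :=
    Real.log_lt_log (by linarith) (by linarith)
  have hAc : A⁻¹ * (-f0) * (k + c - k) = Real.log (1 - u) - Real.log A := by
    have h1 : k + c - k = c := by ring
    rw [h1, hc]
    field_simp
    ring
  rw [hAc] at htan
  simp only [hA] at htan hlog2
  linarith

lemma bound1 {F1 : ℝ → ℝ} {k f1 u : ℝ} (hF1 : IsCDF F1)
    (hk0 : 0 < F1 k) (hk1 : F1 k < 1) (hf1 : 0 < f1) (hd1 : HasDerivAt F1 f1 k)
    (hlc1 : ConcaveOn ℝ {x | 0 < F1 x} (fun x => Real.log (F1 x)))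
    (hu0 : 0 < u) (hu : u ≤ F1 k) :
    k - F1 k / f1 * (Real.log (F1 k) - Real.log u) ≤ quantile F1 u := by
  set q := quantile F1 u with hq
  have hqF : u ≤ F1 q := le_cdf_quantile hF1 hu0 (lt_of_le_of_lt hu hk1)
  have hmem : q ∈ {x | 0 < F1 x} := lt_of_lt_of_le hu0 hqF
  have hkmem : k ∈ {x | 0 < F1 x} := hk0
  have hL : HasDerivAt (fun x => Real.log (F1 x)) ((F1 k)⁻¹ * f1) k :=
    (Real.hasDerivAt_log (ne_of_gt hk0)).comp k hd1
  have htan := concave_tangent hlc1 hkmem hL hmem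
  have hlogu : Real.log u ≤ Real.log (F1 q) := Real.log_le_log hu0 hqF
  have h2 : Real.log u - Real.log (F1 k) ≤ (F1 k)⁻¹ * f1 * (q - k) := by linarith
  have key : F1 k / f1 * (Real.log u - Real.log (F1 k)) ≤ q - k := by
    calc F1 k / f1 * (Real.log u - Real.log (F1 k))
        ≤ F1 k / f1 * ((F1 k)⁻¹ * f1 * (q - k)) :=
          mul_le_mul_of_nonneg_left h2 (le_of_lt (div_pos hk0 hf1))
      _ = q - k := by field_simp
  linarith

end helpers

/-- Upper bound `Δ_k^U` of the paper's Theorem 1 (rank-invariant case, no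
counterfactual bunchers): under bi-log-concavity conditions (concavity of
`ln(1 - F0)` and of `ln F1`), the buncher ATE `E[h0 - h1 | h1 ≤ k ≤ h0]` is at
most `-g(1 - F0(k), f0(k), -B) - g(F1(k), f1(k), -B)` where `B = F1(k) - F0(k)`. -/
theorem stmt10 {Ω : Type*} [MeasurableSpace Ω] (μ : Measure Ω)
    [IsProbabilityMeasure μ]
    (U : Ω → ℝ) (hU : Measurable U)
    (hUnif : μ.map U = volume.restrict (Set.Ioo (0 : ℝ) 1))
    (F0 F1 : ℝ → ℝ) (hF0 : IsCDF F0) (hF1 : IsCDF F1)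
    (hQle : ∀ u ∈ Set.Ioo (0 : ℝ) 1, quantile F1 u ≤ quantile F0 u)
    (h0 h1 : Ω → ℝ)
    (hh0 : h0 = fun ω => quantile F0 (U ω))
    (hh1 : h1 = fun ω => quantile F1 (U ω))
    (k f0 f1 : ℝ)
    (hF0k : F0 k ∈ Set.Ioo (0 : ℝ) 1) (hf0 : 0 < f0)
    (hd0 : HasDerivAt F0 f0 k)
    (hlc0 : ConcaveOn ℝ {x | F0 x < 1} (fun x => Real.log (1 - F0 x)))
    (hF1k : F1 k ∈ Set.Ioo (0 : ℝ) 1) (hf1 : 0 < f1)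
    (hd1 : HasDerivAt F1 f1 k)
    (hlc1 : ConcaveOn ℝ {x | 0 < F1 x} (fun x => Real.log (F1 x)))
    (hB : 0 < F1 k - F0 k) :
    (∫ ω in {ω | h1 ω ≤ k ∧ k ≤ h0 ω}, (h0 ω - h1 ω) ∂μ)
          / (μ {ω | h1 ω ≤ k ∧ k ≤ h0 ω}).toReal
      ≤ -g (1 - F0 k) f0 (-(F1 k - F0 k)) - g (F1 k) f1 (-(F1 k - F0 k)) := by
  obtain ⟨ha00, ha01⟩ := hF0k
  obtain ⟨ha10, ha11⟩ := hF1k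
  subst hh0 hh1
  have hle01 : F0 k ≤ F1 k := by linarith
  have hA0 : (1 : ℝ) - F0 k ≠ 0 := by linarith
  have hA1 : (1 : ℝ) - F1 k ≠ 0 := by linarith
  have hf0' : f0 ≠ 0 := ne_of_gt hf0
  have hf1' : f1 ≠ 0 := ne_of_gt hf1
  have hBne : F1 k - F0 k ≠ 0 := ne_of_gt hB
  have hF0kne : F0 k ≠ 0 := ne_of_gt ha00
  have hF1kne : F1 k ≠ 0 := ne_of_gt ha10
  set S : Set Ω := {ω | quantile F1 (U ω) ≤ k ∧ k ≤ quantile F0 (U ω)} with hSdef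
  set T : Set ℝ := Set.Ioc (F0 k) (F1 k) with hTdef
  have hTsub : T ⊆ Set.Ioo 0 1 := fun u hu => ⟨lt_trans ha00 hu.1, lt_of_le_of_lt hu.2 ha11⟩
  set S' : Set Ω := U ⁻¹' T with hS'def
  have hS'meas : MeasurableSet S' := hU measurableSet_Ioc
  -- the exceptional null set
  set N : Set ℝ := (Set.Ioo (0 : ℝ) 1)ᶜ ∪ {F0 k} with hNdef
  have hNmeas : MeasurableSet N := measurableSet_Ioo.compl.union (measurableSet_singleton _)
  have hNnull : μ (U ⁻¹' N) = 0 := by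
    rw [← Measure.map_apply hU hNmeas, hUnif, Measure.restrict_apply hNmeas]
    have hsub : N ∩ Set.Ioo (0 : ℝ) 1 ⊆ {F0 k} := by
      rintro u ⟨hu1 | hu1, hu2⟩
      · exact absurd hu2 hu1
      · exact hu1
    exact measure_mono_null hsub Real.volume_singleton
  -- pointwise identification off N
  have hiff : ∀ ω, U ω ∉ N → (ω ∈ S ↔ ω ∈ S') := by
    intro ω hωN
    have hu : U ω ∈ Set.Ioo (0 : ℝ) 1 := by
      by_contra h; exact hωN (Or.inl h)
    have hne : U ω ≠ F0 k := fun h => hωN (Or.inr h)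
    obtain ⟨hu0, hu1⟩ := hu
    constructor
    · rintro ⟨hq1, hq0⟩
      refine ⟨?_, (quantile_le_iff hF1 hu0 hu1).mp hq1⟩
      rcases lt_or_ge (F0 k) (U ω) with h | h
      · exact h
      · exfalso
        have hlt : U ω < F0 k := lt_of_le_of_ne h hne
        have hcont : ContinuousAt F0 k := hd0.continuousAt
        have hev : ∀ᶠ x in nhdsWithin k (Set.Iio k), U ω < F0 x :=
          (hcont.eventually (eventually_gt_nhds hlt)).filter_mono nhdsWithin_le_nhds
        obtain ⟨x, hx1, hx2⟩ := (hev.and eventually_mem_nhdsWithin).exists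
        have hqx : quantile F0 (U ω) ≤ x :=
          csInf_le (qset_bddBelow hF0 hu0) (le_of_lt hx1)
        have : x < k := hx2
        linarith
    · rintro ⟨hgt, hle⟩
      refine ⟨(quantile_le_iff hF1 hu0 hu1).mpr hle, ?_⟩
      by_contra h
      push_neg at h
      have : U ω ≤ F0 k := (le_cdf_quantile hF0 hu0 hu1).trans (hF0.1 h.le)
      linarith
  have hae : S =ᵐ[μ] S' := by
    refine (MeasureTheory.ae_eq_set).mpr
      ⟨measure_mono_null ?_ hNnull, measure_mono_null ?_ hNnull⟩
    · rintro ω ⟨hωS, hωS'⟩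
      by_contra hN
      exact hωS' ((hiff ω hN).mp hωS)
    · rintro ω ⟨hωS', hωS⟩
      by_contra hN
      exact hωS ((hiff ω hN).mpr hωS')
  -- denominator
  have hden : (μ S).toReal = F1 k - F0 k := by
    rw [measure_congr hae, hS'def, ← Measure.map_apply hU measurableSet_Ioc, hUnif,
      Measure.restrict_apply measurableSet_Ioc, Set.inter_eq_self_of_subset_left hTsub,
      Real.volume_Ioc, ENNReal.toReal_ofReal hB.le]
  -- clamped quantile functions
  set cl : ℝ → ℝ := fun u => max (F0 k) (min u (F1 k)) with hcldef
  have hcl_lb : ∀ u, F0 k ≤ cl u := fun u => le_max_left _ _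
  have hcl_ub : ∀ u, cl u ≤ F1 k := fun u => max_le (by linarith) (min_le_right _ _)
  have hcl_pos : ∀ u, 0 < cl u := fun u => lt_of_lt_of_le ha00 (hcl_lb u)
  have hcl_lt1 : ∀ u, cl u < 1 := fun u => lt_of_le_of_lt (hcl_ub u) ha11
  have hclmono : Monotone cl := fun x y hxy =>
    max_le_max le_rfl (min_le_min hxy le_rfl)
  have hclid : ∀ u ∈ T, cl u = u := by
    intro u hu
    rw [hcldef]
    simp only
    rw [min_eq_left hu.2, max_eq_right hu.1.le]
  set cQ0 : ℝ → ℝ := fun u => quantile F0 (cl u) with hcQ0def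
  set cQ1 : ℝ → ℝ := fun u => quantile F1 (cl u) with hcQ1def
  have hcQ0mono : Monotone cQ0 := fun x y hxy =>
    quantile_mono hF0 (hcl_pos x) (hclmono hxy) (hcl_lt1 y)
  have hcQ1mono : Monotone cQ1 := fun x y hxy =>
    quantile_mono hF1 (hcl_pos x) (hclmono hxy) (hcl_lt1 y)
  have hcQ0meas : Measurable cQ0 := hcQ0mono.measurable
  have hcQ1meas : Measurable cQ1 := hcQ1mono.measurable
  -- numerator reduction to an integral over T
  have hnum1 : ∫ ω in S, (quantile F0 (U ω) - quantile F1 (U ω)) ∂μ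
      = ∫ u in T, (cQ0 u - cQ1 u) := by
    rw [setIntegral_congr_set hae]
    have heq : Set.EqOn (fun ω => quantile F0 (U ω) - quantile F1 (U ω))
        (fun ω => cQ0 (U ω) - cQ1 (U ω)) S' := by
      intro ω hω
      have hmem : U ω ∈ T := hω
      simp only [hcQ0def, hcQ1def, hclid _ hmem]
    rw [setIntegral_congr_fun hS'meas heq]
    have := setIntegral_map (μ := μ) (g := U) (f := fun u => cQ0 u - cQ1 u)
      (s := T) measurableSet_Ioc
      ((hcQ0meas.sub hcQ1meas).aestronglyMeasurable) hU.aemeasurable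
    rw [← this, hUnif, Measure.restrict_restrict measurableSet_Ioc,
      Set.inter_eq_self_of_subset_left hTsub]
  -- the majorant
  set φ : ℝ → ℝ := fun u => (1 - F0 k) / f0 * (Real.log (1 - F0 k) - Real.log (1 - u))
      + F1 k / f1 * (Real.log (F1 k) - Real.log u) with hφdef
  have hφcont : ContinuousOn φ (Set.Icc (F0 k) (F1 k)) := by
    apply ContinuousOn.add
    · apply continuousOn_const.mul
      apply continuousOn_const.sub
      apply Real.continuousOn_log.comp (continuousOn_const.sub continuousOn_id)
      intro u hu
      simp only [Set.mem_compl_iff, Set.mem_singleton_iff]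
      have := hu.2
      intro hc
      have : (1 : ℝ) - u = 0 := hc
      linarith
    · apply continuousOn_const.mul
      apply continuousOn_const.sub
      apply Real.continuousOn_log.comp continuousOn_id
      intro u hu
      simp only [Set.mem_compl_iff, Set.mem_singleton_iff, id]
      have := hu.1
      intro hc
      rw [hc] at this
      linarith
  have hφint : IntegrableOn φ T volume :=
    (hφcont.integrableOn_compact isCompact_Icc).mono_set Set.Ioc_subset_Icc_self
  have hint1 : IntegrableOn (fun u => cQ0 u - cQ1 u) T volume := by
    apply Measure.integrableOn_of_bounded (M := |quantile F0 (F1 k)| + |quantile F1 (F0 k)|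
      + |quantile F0 (F0 k)| + |quantile F1 (F1 k)|) measure_Ioc_lt_top.ne
      ((hcQ0meas.sub hcQ1meas).aestronglyMeasurable)
    filter_upwards with u
    have h1 : cQ0 u ≤ quantile F0 (F1 k) :=
      quantile_mono hF0 (hcl_pos u) (hcl_ub u) ha11
    have h2 : quantile F0 (F0 k) ≤ cQ0 u :=
      quantile_mono hF0 ha00 (hcl_lb u) (hcl_lt1 u)
    have h3 : cQ1 u ≤ quantile F1 (F1 k) :=
      quantile_mono hF1 (hcl_pos u) (hcl_ub u) ha11
    have h4 : quantile F1 (F0 k) ≤ cQ1 u :=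
      quantile_mono hF1 ha00 (hcl_lb u) (hcl_lt1 u)
    simp only [Pi.sub_apply]
    rw [Real.norm_eq_abs, abs_le]
    constructor
    · have := le_abs_self (quantile F0 (F1 k))
      have := le_abs_self (quantile F1 (F1 k))
      have := neg_abs_le (quantile F0 (F0 k))
      have := neg_abs_le (quantile F1 (F0 k))
      have := abs_nonneg (quantile F0 (F1 k))
      have := abs_nonneg (quantile F1 (F0 k))
      have := abs_nonneg (quantile F0 (F0 k))
      have := abs_nonneg (quantile F1 (F1 k))
      linarith
    · have := le_abs_self (quantile F0 (F1 k))
      have := le_abs_self (quantile F1 (F1 k))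
      have := neg_abs_le (quantile F0 (F0 k))
      have := neg_abs_le (quantile F1 (F0 k))
      have := abs_nonneg (quantile F0 (F1 k))
      have := abs_nonneg (quantile F1 (F0 k))
      have := abs_nonneg (quantile F0 (F0 k))
      have := abs_nonneg (quantile F1 (F1 k))
      linarith
  have hmono_int : ∫ u in T, (cQ0 u - cQ1 u) ≤ ∫ u in T, φ u := by
    apply setIntegral_mono_on hint1 hφint measurableSet_Ioc
    intro u hu
    have hu1 : u < 1 := lt_of_le_of_lt hu.2 ha11
    have hu0' : 0 < u := lt_trans ha00 hu.1
    have hb0 := bound0 hF0 ha00 ha01 hf0 hd0 hlc0 hu.1 hu1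
    have hb1 := bound1 hF1 ha10 ha11 hf1 hd1 hlc1 hu0' hu.2
    have hcQ0u : cQ0 u = quantile F0 u := by rw [hcQ0def]; simp only; rw [hclid _ hu]
    have hcQ1u : cQ1 u = quantile F1 u := by rw [hcQ1def]; simp only; rw [hclid _ hu]
    rw [hcQ0u, hcQ1u, hφdef]
    simp only
    linarith
  -- compute the integral of the majorant
  have hii1 : IntervalIntegrable (fun u => Real.log (1 - u)) volume (F0 k) (F1 k) := by
    apply ContinuousOn.intervalIntegrable
    apply Real.continuousOn_log.comp (continuousOn_const.sub continuousOn_id)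
    intro u hu
    rw [Set.uIcc_of_le hle01] at hu
    simp only [Set.mem_compl_iff, Set.mem_singleton_iff]
    intro hc
    have : (1 : ℝ) - u = 0 := hc
    have := hu.2
    linarith
  have hii2 : IntervalIntegrable Real.log volume (F0 k) (F1 k) := by
    apply ContinuousOn.intervalIntegrable
    apply Real.continuousOn_log.mono
    intro u hu
    rw [Set.uIcc_of_le hle01] at hu
    simp only [Set.mem_compl_iff, Set.mem_singleton_iff]
    intro hc
    rw [hc] at hu
    have := hu.1
    linarith
  have he1 : ∫ u in (F0 k)..(F1 k), Real.log (1 - u)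
      = (1 - F0 k) * Real.log (1 - F0 k) - (1 - F1 k) * Real.log (1 - F1 k)
        - (1 - F0 k) + (1 - F1 k) := by
    rw [intervalIntegral.integral_comp_sub_left (fun x => Real.log x) 1]
    rw [integral_log]
  have he2 : ∫ u in (F0 k)..(F1 k), Real.log u
      = F1 k * Real.log (F1 k) - F0 k * Real.log (F0 k) - F1 k + F0 k := by
    rw [integral_log]
  have hφval : ∫ u in T, φ u
      = (1 - F0 k) / f0 * ((F1 k - F0 k) * Real.log (1 - F0 k)
          - ((1 - F0 k) * Real.log (1 - F0 k) - (1 - F1 k) * Real.log (1 - F1 k)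
            - (1 - F0 k) + (1 - F1 k)))
        + F1 k / f1 * ((F1 k - F0 k) * Real.log (F1 k)
          - (F1 k * Real.log (F1 k) - F0 k * Real.log (F0 k) - F1 k + F0 k)) := by
    rw [hTdef, ← intervalIntegral.integral_of_le hle01]
    rw [hφdef]
    simp only
    rw [intervalIntegral.integral_add
      ((intervalIntegrable_const.sub hii1).const_mul _)
      ((intervalIntegrable_const.sub hii2).const_mul _)]
    rw [intervalIntegral.integral_const_mul, intervalIntegral.integral_const_mul]
    rw [intervalIntegral.integral_sub intervalIntegrable_const hii1]
    rw [intervalIntegral.integral_sub intervalIntegrable_const hii2]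
    rw [intervalIntegral.integral_const, intervalIntegral.integral_const]
    rw [he1, he2, smul_eq_mul, smul_eq_mul]
  -- put everything together
  have hnum_le : ∫ ω in S, (quantile F0 (U ω) - quantile F1 (U ω)) ∂μ ≤ ∫ u in T, φ u := by
    rw [hnum1]; exact hmono_int
  have hRHS : (∫ u in T, φ u) / (F1 k - F0 k)
      = -g (1 - F0 k) f0 (-(F1 k - F0 k)) - g (F1 k) f1 (-(F1 k - F0 k)) := by
    have l1 : Real.log (1 + -(F1 k - F0 k) / (1 - F0 k))
        = Real.log (1 - F1 k) - Real.log (1 - F0 k) := by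
      have h : 1 + -(F1 k - F0 k) / (1 - F0 k) = (1 - F1 k) / (1 - F0 k) := by
        field_simp
        ring
      rw [h, Real.log_div (by linarith) (by linarith)]
    have l2 : Real.log (1 + -(F1 k - F0 k) / F1 k)
        = Real.log (F0 k) - Real.log (F1 k) := by
      have h : 1 + -(F1 k - F0 k) / F1 k = F0 k / F1 k := by
        field_simp
        ring
      rw [h, Real.log_div (by linarith) (by linarith)]
    rw [hφval, g, g, l1, l2]
    have e0 : f0 * -(F1 k - F0 k) = -(f0 * (F1 k - F0 k)) := by ring
    have e1 : f1 * -(F1 k - F0 k) = -(f1 * (F1 k - F0 k)) := by ring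
    rw [e0, e1, div_neg, div_neg, div_eq_iff hBne]
    field_simp [hf0', hf1', hBne]
    ring
  calc (∫ ω in S, (quantile F0 (U ω) - quantile F1 (U ω)) ∂μ) / (μ S).toReal
      ≤ (∫ u in T, φ u) / (F1 k - F0 k) := by
        rw [hden]
        exact (div_le_div_iff_of_pos_right hB).mpr hnum_le
    _ = _ := hRHS
end
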